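/- Let Ω ⊂ ℝ^d be a nonempty compact convex set, let μ_src and μ_tgt be Borel probability measures supported in Ω, let H be a positive integer, let k be a positive integer, and set H_k := k(H+1) − 1. Suppose V = (V_0,…,V_{H_k+1}) is feasible and optimal for the dynamic dual LP on Ω with horizon H_k (its objective is ≥ that of every feasible family for horizon H_k). Then the subsampled family (V_{k·h})_{h=0}^{H+1} is feasible and optimal for the dynamic dual LP on Ω with horizon H. -/

import Mathlib

open MeasureTheory

/-- Feasibility for the dynamic dual LP on `Ω` with horizon `H'`. -/
def DynDualFeasible {d : ℕ} (Ω : Set (EuclideanSpace ℝ (Fin d))) (H' : ℕ)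
    (V : ℕ → EuclideanSpace ℝ (Fin d) → ℝ) : Prop :=
  (∀ h ≤ H' + 1, ContinuousOn (V h) Ω) ∧
  ∀ h ≤ H', ∀ x ∈ Ω, ∀ y ∈ Ω,
    V h x ≤ ((H' : ℝ) + 1) / 2 * ‖x - y‖ ^ 2 + V (h + 1) y

variable {d : ℕ}

noncomputable def Qinf (Ω : Set (EuclideanSpace ℝ (Fin d))) (C : ℝ)
    (f : EuclideanSpace ℝ (Fin d) → ℝ) (x : EuclideanSpace ℝ (Fin d)) : ℝ :=
  ⨅ y : Ω, C * ‖x - (y : EuclideanSpace ℝ (Fin d))‖ ^ 2 + f y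

lemma qinf_bddBelow {Ω : Set (EuclideanSpace ℝ (Fin d))} (hne : Ω.Nonempty)
    (hcomp : IsCompact Ω) {f : EuclideanSpace ℝ (Fin d) → ℝ} (hf : ContinuousOn f Ω)
    {C : ℝ} (hC : 0 ≤ C) (x : EuclideanSpace ℝ (Fin d)) :
    BddBelow (Set.range fun y : Ω => C * ‖x - (y : EuclideanSpace ℝ (Fin d))‖ ^ 2 + f y) := by
  obtain ⟨z, hz, hzmin⟩ := hcomp.exists_isMinOn hne hf
  refine ⟨f z, ?_⟩
  rintro _ ⟨y, rfl⟩
  have h1 : f z ≤ f y := isMinOn_iff.mp hzmin y y.2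
  have h2 : 0 ≤ C * ‖x - (y : EuclideanSpace ℝ (Fin d))‖ ^ 2 := by positivity
  dsimp only
  linarith

lemma qinf_le {Ω : Set (EuclideanSpace ℝ (Fin d))} (hne : Ω.Nonempty)
    (hcomp : IsCompact Ω) {f : EuclideanSpace ℝ (Fin d) → ℝ} (hf : ContinuousOn f Ω)
    {C : ℝ} (hC : 0 ≤ C) {x y : EuclideanSpace ℝ (Fin d)} (hy : y ∈ Ω) :
    Qinf Ω C f x ≤ C * ‖x - y‖ ^ 2 + f y :=
  ciInf_le (qinf_bddBelow hne hcomp hf hC x) ⟨y, hy⟩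

lemma le_qinf {Ω : Set (EuclideanSpace ℝ (Fin d))} (hne : Ω.Nonempty)
    {f : EuclideanSpace ℝ (Fin d) → ℝ} {C a : ℝ} {x : EuclideanSpace ℝ (Fin d)}
    (h : ∀ y ∈ Ω, a ≤ C * ‖x - y‖ ^ 2 + f y) : a ≤ Qinf Ω C f x := by
  haveI := hne.to_subtype
  exact le_ciInf fun y => h y y.2

lemma qinf_step {Ω : Set (EuclideanSpace ℝ (Fin d))} (hne : Ω.Nonempty)
    (hcomp : IsCompact Ω) {f : EuclideanSpace ℝ (Fin d) → ℝ} (hf : ContinuousOn f Ω)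
    {C1 C2 C3 : ℝ} (h1 : 0 < C1) (h2 : 0 < C2) (h3 : 0 < C3)
    (hharm : C3 * (C1 + C2) = C1 * C2) {x y : EuclideanSpace ℝ (Fin d)} (hy : y ∈ Ω) :
    Qinf Ω C3 f x ≤ C1 * ‖x - y‖ ^ 2 + Qinf Ω C2 f y := by
  rw [← sub_le_iff_le_add']
  apply le_qinf hne
  intro z hz
  have hq := qinf_le hne hcomp hf h3.le (x := x) hz
  have htri : ‖x - z‖ ≤ ‖x - y‖ + ‖y - z‖ := norm_sub_le_norm_sub_add_norm_sub x y z
  have h4 : ‖x - z‖ ^ 2 ≤ (‖x - y‖ + ‖y - z‖) ^ 2 := by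
    nlinarith [norm_nonneg (x - z), norm_nonneg (x - y), norm_nonneg (y - z)]
  have h5 : C3 * (‖x - y‖ + ‖y - z‖) ^ 2 ≤ C1 * ‖x - y‖ ^ 2 + C2 * ‖y - z‖ ^ 2 := by
    nlinarith [sq_nonneg (C1 * ‖x - y‖ - C2 * ‖y - z‖), add_pos h1 h2]
  nlinarith [mul_le_mul_of_nonneg_left h4 h3.le]

lemma qinf_continuousOn {Ω : Set (EuclideanSpace ℝ (Fin d))} (hne : Ω.Nonempty)
    (hcomp : IsCompact Ω) {f : EuclideanSpace ℝ (Fin d) → ℝ} (hf : ContinuousOn f Ω)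
    {C : ℝ} (hC : 0 ≤ C) : ContinuousOn (Qinf Ω C f) Ω := by
  obtain ⟨R, hR⟩ := hcomp.isBounded.exists_norm_le
  have hR0 : 0 ≤ R := le_trans (norm_nonneg _) (hR _ hne.choose_spec)
  have key : ∀ x ∈ Ω, ∀ x' ∈ Ω,
      Qinf Ω C f x ≤ Qinf Ω C f x' + 6 * C * R * ‖x - x'‖ := by
    intro x hx x' hx'
    rw [← sub_le_iff_le_add]
    apply le_qinf hne
    intro z hz
    have hq := qinf_le hne hcomp hf hC (x := x) hz
    have htri : ‖x - z‖ ≤ ‖x' - z‖ + ‖x - x'‖ := by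
      have := norm_sub_le_norm_sub_add_norm_sub x x' z
      linarith
    have hb1 : ‖x - z‖ ≤ 2 * R := by
      calc ‖x - z‖ ≤ ‖x‖ + ‖z‖ := norm_sub_le x z
      _ ≤ 2 * R := by have := hR x hx; have := hR z hz; linarith
    have hb2 : ‖x' - z‖ ≤ 2 * R := by
      calc ‖x' - z‖ ≤ ‖x'‖ + ‖z‖ := norm_sub_le x' z
      _ ≤ 2 * R := by have := hR x' hx'; have := hR z hz; linarith
    have hb3 : ‖x - x'‖ ≤ 2 * R := by
      calc ‖x - x'‖ ≤ ‖x‖ + ‖x'‖ := norm_sub_le x x'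
      _ ≤ 2 * R := by have := hR x hx; have := hR x' hx'; linarith
    have h4 : ‖x - z‖ ^ 2 ≤ (‖x' - z‖ + ‖x - x'‖) ^ 2 := by
      nlinarith [norm_nonneg (x - z), norm_nonneg (x' - z), norm_nonneg (x - x')]
    have h5 : (‖x' - z‖ + ‖x - x'‖) ^ 2 ≤ ‖x' - z‖ ^ 2 + 6 * R * ‖x - x'‖ := by
      nlinarith [mul_le_mul_of_nonneg_right hb2 (norm_nonneg (x - x')),
        mul_le_mul_of_nonneg_right hb3 (norm_nonneg (x - x'))]
    have hkey : C * ‖x - z‖ ^ 2 ≤ C * ‖x' - z‖ ^ 2 + 6 * C * R * ‖x - x'‖ := by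
      have := mul_le_mul_of_nonneg_left (h4.trans h5) hC
      nlinarith
    linarith
  have hlip : LipschitzOnWith (6 * C * R).toNNReal (Qinf Ω C f) Ω := by
    apply LipschitzOnWith.of_dist_le_mul
    intro x hx y hy
    rw [Real.dist_eq, dist_eq_norm]
    rw [abs_sub_le_iff]
    have h1 := key x hx y hy
    have h2 := key y hy x hx
    rw [norm_sub_rev] at h2
    constructor
    · have : ((6 * C * R).toNNReal : ℝ) = 6 * C * R := Real.coe_toNNReal _ (by positivity)
      rw [this]; linarith
    · have : ((6 * C * R).toNNReal : ℝ) = 6 * C * R := Real.coe_toNNReal _ (by positivity)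
      rw [this]; linarith
  exact hlip.continuousOn

lemma integrable_of_contOn {Ω : Set (EuclideanSpace ℝ (Fin d))} (hcomp : IsCompact Ω)
    {μ : Measure (EuclideanSpace ℝ (Fin d))} [IsFiniteMeasure μ] (hnull : μ Ωᶜ = 0)
    {f : EuclideanSpace ℝ (Fin d) → ℝ} (hf : ContinuousOn f Ω) : Integrable f μ := by
  have hmeas := hcomp.measurableSet
  have hind : Integrable (Ω.indicator f) μ :=
    (hf.integrableOn_compact hcomp).integrable_indicator hmeas
  have hae : ∀ᵐ x ∂μ, x ∈ Ω := by
    rw [ae_iff]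
    simpa [Set.compl_def] using hnull
  exact hind.congr (by filter_upwards [hae] with x hx; exact Set.indicator_of_mem hx f)

lemma chain_aux {Ω : Set (EuclideanSpace ℝ (Fin d))} (hconv : Convex ℝ Ω)
    {C : ℝ} (hC : 0 ≤ C) {k : ℕ} (hk : 0 < k) (V : ℕ → EuclideanSpace ℝ (Fin d) → ℝ) (m : ℕ)
    (hstep : ∀ j < k, ∀ x ∈ Ω, ∀ y ∈ Ω, V (m + j) x ≤ C * ‖x - y‖ ^ 2 + V (m + j + 1) y)
    {x y : EuclideanSpace ℝ (Fin d)} (hx : x ∈ Ω) (hy : y ∈ Ω) :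
    V m x ≤ C / k * ‖x - y‖ ^ 2 + V (m + k) y := by
  have hk0 : (k : ℝ) ≠ 0 := Nat.cast_ne_zero.2 hk.ne'
  set z : ℕ → EuclideanSpace ℝ (Fin d) := fun i => x + ((i : ℝ) / k) • (y - x) with hz
  have hzmem : ∀ i ≤ k, z i ∈ Ω := by
    intro i hi
    have h0 : (0 : ℝ) ≤ (i : ℝ) / k := by positivity
    have h1 : (i : ℝ) / k ≤ 1 := by
      rw [div_le_one (by exact_mod_cast hk)]
      exact_mod_cast hi
    have heq : z i = (1 - (i : ℝ) / k) • x + ((i : ℝ) / k) • y := by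
      simp only [hz]
      rw [smul_sub, sub_smul, one_smul]
      abel
    rw [heq]
    exact hconv hx hy (by linarith) h0 (by ring)
  have hdiff : ∀ i : ℕ, ‖z i - z (i + 1)‖ ^ 2 = (1 / (k : ℝ)) ^ 2 * ‖x - y‖ ^ 2 := by
    intro i
    have heq : z i - z (i + 1) = (-(1 / (k : ℝ))) • (y - x) := by
      simp only [hz]
      rw [show x + ((i : ℝ) / k) • (y - x) - (x + (((i + 1 : ℕ) : ℝ) / k) • (y - x))
          = (((i : ℝ) / k) - (((i + 1 : ℕ) : ℝ) / k)) • (y - x) by rw [sub_smul]; abel]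
      congr 1
      push_cast
      field_simp
      ring
    rw [heq, norm_smul, Real.norm_eq_abs, abs_neg, abs_of_nonneg (by positivity : (0:ℝ) ≤ 1 / k),
      mul_pow, norm_sub_rev y x]
  have key : ∀ i ≤ k, V m x ≤ C * i / (k : ℝ) ^ 2 * ‖x - y‖ ^ 2 + V (m + i) (z i) := by
    intro i hi
    induction i with
    | zero =>
      have hz0 : z 0 = x := by simp [hz]
      simp [hz0]
    | succ i ih =>
      have hik : i < k := hi
      have h1 := ih (le_of_lt hik)
      have h2 := hstep i hik (z i) (hzmem i (le_of_lt hik)) (z (i + 1)) (hzmem (i + 1) hi)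
      rw [hdiff i] at h2
      have harith : C * (i : ℝ) / (k : ℝ) ^ 2 * ‖x - y‖ ^ 2 + C * ((1 / (k : ℝ)) ^ 2 * ‖x - y‖ ^ 2)
          = C * ((i : ℕ) + 1 : ℕ) / (k : ℝ) ^ 2 * ‖x - y‖ ^ 2 := by
        push_cast
        field_simp
      calc V m x ≤ C * i / (k : ℝ) ^ 2 * ‖x - y‖ ^ 2 + V (m + i) (z i) := h1
        _ ≤ C * i / (k : ℝ) ^ 2 * ‖x - y‖ ^ 2
            + (C * ((1 / (k : ℝ)) ^ 2 * ‖x - y‖ ^ 2) + V (m + i + 1) (z (i + 1))) := by linarith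
        _ = C * ((i : ℕ) + 1 : ℕ) / (k : ℝ) ^ 2 * ‖x - y‖ ^ 2 + V (m + (i + 1)) (z (i + 1)) := by
            rw [← harith, ← Nat.add_assoc]; push_cast; ring_nf
  have hzk : z k = y := by
    simp only [hz]
    rw [div_self hk0, one_smul]
    abel
  have hck : C * (k : ℝ) / (k : ℝ) ^ 2 = C / k := by
    field_simp
  have := key k le_rfl
  rw [hzk, hck] at this
  exact this



/-- time-scale invariance of optimal dual solutions. If `V` is feasible and
optimal for the dynamic dual LP with horizon `H_k = k(H+1) − 1`, then the subsampled family
`h ↦ V_{k·h}` is feasible and optimal for the dynamic dual LP with horizon `H`. -/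
theorem stmt14 {d : ℕ} (Ω : Set (EuclideanSpace ℝ (Fin d)))
    (hne : Ω.Nonempty) (hcomp : IsCompact Ω) (hconv : Convex ℝ Ω)
    (μsrc μtgt : Measure (EuclideanSpace ℝ (Fin d)))
    [IsProbabilityMeasure μsrc] [IsProbabilityMeasure μtgt]
    (hsrc : μsrc Ωᶜ = 0) (htgt : μtgt Ωᶜ = 0)
    (H k : ℕ) (hH : 0 < H) (hk : 0 < k)
    (V : ℕ → EuclideanSpace ℝ (Fin d) → ℝ)
    (hVfeas : DynDualFeasible Ω (k * (H + 1) - 1) V)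
    (hVopt : ∀ W : ℕ → EuclideanSpace ℝ (Fin d) → ℝ,
      DynDualFeasible Ω (k * (H + 1) - 1) W →
      ∫ x, W 0 x ∂μsrc - ∫ x, W (k * (H + 1) - 1 + 1) x ∂μtgt ≤
        ∫ x, V 0 x ∂μsrc - ∫ x, V (k * (H + 1) - 1 + 1) x ∂μtgt) :
    DynDualFeasible Ω H (fun h => V (k * h)) ∧
    ∀ W : ℕ → EuclideanSpace ℝ (Fin d) → ℝ, DynDualFeasible Ω H W →
      ∫ x, W 0 x ∂μsrc - ∫ x, W (H + 1) x ∂μtgt ≤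
        ∫ x, V (k * 0) x ∂μsrc - ∫ x, V (k * (H + 1)) x ∂μtgt := by
  have hk0 : (k : ℝ) ≠ 0 := Nat.cast_ne_zero.2 hk.ne'
  have hNpos : 0 < k * (H + 1) := Nat.mul_pos hk (Nat.succ_pos H)
  set N := k * (H + 1) with hN
  have hN1 : N - 1 + 1 = N := Nat.sub_add_cancel hNpos
  have hcastN : ((N - 1 : ℕ) : ℝ) + 1 = (k : ℝ) * ((H : ℝ) + 1) := by
    rw [Nat.cast_sub hNpos, hN]
    push_cast
    ring
  constructor
  · constructor
    · intro h hh
      have hle : k * h ≤ N - 1 + 1 := by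
        rw [hN1, hN]; exact Nat.mul_le_mul_left k hh
      exact hVfeas.1 (k * h) hle
    · intro h hh x hx y hy
      have hstep : ∀ j < k, ∀ x' ∈ Ω, ∀ y' ∈ Ω,
          V (k * h + j) x' ≤ (((N - 1 : ℕ) : ℝ) + 1) / 2 * ‖x' - y'‖ ^ 2
            + V (k * h + j + 1) y' := by
        intro j hj x' hx' y' hy'
        have hb1 : k * h + j + 1 ≤ k * (h + 1) := by rw [Nat.mul_succ]; omega
        have hb2 : k * (h + 1) ≤ N := by rw [hN]; exact Nat.mul_le_mul_left k (by omega)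
        exact hVfeas.2 (k * h + j) (by omega) x' hx' y' hy'
      have hC : (0 : ℝ) ≤ (((N - 1 : ℕ) : ℝ) + 1) / 2 := by positivity
      have hchain := chain_aux hconv hC hk V (k * h) hstep hx hy
      have hconst : (((N - 1 : ℕ) : ℝ) + 1) / 2 / (k : ℝ) = ((H : ℝ) + 1) / 2 := by
        rw [hcastN]; field_simp
      have hidx : k * h + k = k * (h + 1) := by rw [Nat.mul_succ]
      rw [hconst, hidx] at hchain
      exact hchain
  · intro W hW
    set W' : ℕ → EuclideanSpace ℝ (Fin d) → ℝ := fun j =>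
      if N ≤ j then W (H + 1)
      else Qinf Ω ((k : ℝ) * ((H : ℝ) + 1) / (2 * ((k - j % k : ℕ) : ℝ))) (W (j / k + 1))
      with hW'
    have hW'cont : ∀ j, ContinuousOn (W' j) Ω := by
      intro j
      by_cases hj : N ≤ j
      · simp only [hW', if_pos hj]
        exact hW.1 (H + 1) le_rfl
      · push_neg at hj
        have hdivH : j / k ≤ H := by
          have : j / k < H + 1 := (Nat.div_lt_iff_lt_mul hk).2 (by rw [mul_comm, ← hN]; exact hj)
          omega
        simp only [hW', if_neg (not_le.2 hj)]
        exact qinf_continuousOn hne hcomp (hW.1 (j / k + 1) (by omega))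
          (by apply div_nonneg <;> positivity)
    have claimA : ∀ h' ≤ H + 1, ∀ x ∈ Ω, W h' x ≤ W' (k * h') x := by
      intro h' hh' x hx
      rcases eq_or_lt_of_le hh' with heq | hlt
      · subst heq
        simp only [hW', if_pos (le_of_eq hN)]
        exact le_rfl
      · have hh : h' ≤ H := by omega
        have hlt2 : k * h' < N := by
          have h1 : k * h' < k * (h' + 1) := by rw [Nat.mul_succ]; omega
          have h2 : k * (h' + 1) ≤ N := by rw [hN]; exact Nat.mul_le_mul_left k (by omega)
          omega
        simp only [hW', if_neg (not_le.2 hlt2)]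
        rw [Nat.mul_mod_right, Nat.mul_div_cancel_left _ hk, Nat.sub_zero]
        apply le_qinf hne
        intro y hy
        have hfeas := hW.2 h' hh x hx y hy
        have hcc : (k : ℝ) * ((H : ℝ) + 1) / (2 * ((k : ℕ) : ℝ)) = ((H : ℝ) + 1) / 2 := by
          field_simp
        rw [hcc]
        exact hfeas
    have feasW' : DynDualFeasible Ω (N - 1) W' := by
      constructor
      · intro j _; exact hW'cont j
      · intro j hj x hx y hy
        have hjlt : j < N := by omega
        have hmod : j % k < k := Nat.mod_lt j hk
        have hdivH : j / k ≤ H := by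
          have : j / k < H + 1 := (Nat.div_lt_iff_lt_mul hk).2 (by rw [mul_comm, ← hN]; exact hjlt)
          omega
        set r := j % k with hr
        set h := j / k with hh
        have hjeq : k * h + r = j := Nat.div_add_mod j k
        rw [hcastN]
        simp only [hW', if_neg (not_le.2 hjlt)]
        by_cases hrk : r + 1 = k
        · have hkr : k - r = 1 := by omega
          rw [hkr]
          have hcc : (k : ℝ) * ((H : ℝ) + 1) / (2 * ((1 : ℕ) : ℝ))
              = (k : ℝ) * ((H : ℝ) + 1) / 2 := by norm_num
          rw [hcc]
          have hj1 : j + 1 = k * (h + 1) := by rw [Nat.mul_succ]; omega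
          have hA := claimA (h + 1) (by omega) y hy
          rw [← hj1] at hA
          have hq := qinf_le hne hcomp (hW.1 (h + 1) (by omega))
            (C := (k : ℝ) * ((H : ℝ) + 1) / 2) (by positivity) (x := x) hy
          calc Qinf Ω ((k : ℝ) * ((H : ℝ) + 1) / 2) (W (h + 1)) x
              ≤ (k : ℝ) * ((H : ℝ) + 1) / 2 * ‖x - y‖ ^ 2 + W (h + 1) y := hq
            _ ≤ (k : ℝ) * ((H : ℝ) + 1) / 2 * ‖x - y‖ ^ 2 + W' (j + 1) y := by linarith
        · have hrk2 : r + 1 < k := by omega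
          have hj1lt : j + 1 < N := by
            have h1 : j + 1 < k * (h + 1) := by rw [Nat.mul_succ]; omega
            have h2 : k * (h + 1) ≤ N := by rw [hN]; exact Nat.mul_le_mul_left k (by omega)
            omega
          have hmod1 : (j + 1) % k = r + 1 := by
            rw [show j + 1 = k * h + (r + 1) by omega, Nat.mul_add_mod, Nat.mod_eq_of_lt hrk2]
          have hdiv1 : (j + 1) / k = h := by
            rw [show j + 1 = k * h + (r + 1) by omega, Nat.mul_add_div hk,
              Nat.div_eq_of_lt hrk2, Nat.add_zero]
          simp only [if_neg (not_le.2 hj1lt)]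
          rw [hmod1, hdiv1]
          have hu : ((k - r : ℕ) : ℝ) = (k : ℝ) - (r : ℝ) := by
            rw [Nat.cast_sub (le_of_lt hmod)]
          have hu2 : ((k - (r + 1) : ℕ) : ℝ) = (k : ℝ) - (r : ℝ) - 1 := by
            rw [Nat.cast_sub (le_of_lt hrk2)]; push_cast; ring
          have hupos : (0 : ℝ) < (k : ℝ) - (r : ℝ) := by
            have : (r : ℝ) < (k : ℝ) := Nat.cast_lt.2 hmod
            linarith
          have hupos2 : (0 : ℝ) < (k : ℝ) - (r : ℝ) - 1 := by
            have : ((r : ℝ) + 1) < (k : ℝ) := by exact_mod_cast hrk2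
            linarith
          have hApos : (0 : ℝ) < (k : ℝ) * ((H : ℝ) + 1) := by positivity
          apply qinf_step hne hcomp (hW.1 (h + 1) (by omega))
            (by positivity)
            (by rw [hu2]; positivity)
            (by rw [hu]; positivity)
            ?_ hy
          rw [hu, hu2]
          field_simp
          ring
    have hopt := hVopt W' feasW'
    rw [hN1] at hopt
    have hend : W' N = W (H + 1) := by simp [hW']
    have hint1 : Integrable (W 0) μsrc := integrable_of_contOn hcomp hsrc (hW.1 0 (by omega))
    have hint2 : Integrable (W' 0) μsrc := integrable_of_contOn hcomp hsrc (hW'cont 0)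
    have haemem : ∀ᵐ x ∂μsrc, x ∈ Ω := by
      rw [ae_iff]; simpa [Set.compl_def] using hsrc
    have hmono : ∫ x, W 0 x ∂μsrc ≤ ∫ x, W' 0 x ∂μsrc := by
      apply integral_mono_ae hint1 hint2
      filter_upwards [haemem] with x hx
      have := claimA 0 (by omega) x hx
      rwa [Nat.mul_zero] at this
    rw [hend] at hopt
    rw [show k * 0 = 0 from Nat.mul_zero k]
    linarith
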